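/- arXiv:1206.0631 — 3 statements merged into one kernel-verified Lean document; each statement's English description precedes it below -/
import Mathlib

section
/- For any 3×3 real matrix P with third row zero, Tr(Pᵀ · T′(P)) ≥ 0, where T′(P) = P + Pᵀ − Tr(P)·I; equality holds if and only if p_{11} = p_{22}, p_{12} = −p_{21}, and p_{13} = p_{23} = 0. -/
open Matrix

/-- For a 3×3 matrix `P` with zero third row, `Tr(Pᵀ · T′(P)) ≥ 0`, with equality
iff `p₁₁ = p₂₂`, `p₁₂ = −p₂₁`, `p₁₃ = p₂₃ = 0`, where `T′(P) = P + Pᵀ − Tr(P)·I`. -/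
theorem stmt9 (P : Matrix (Fin 3) (Fin 3) ℝ) (h3 : ∀ j, P 2 j = 0) :
    0 ≤ (Pᵀ * (P + Pᵀ - P.trace • (1 : Matrix (Fin 3) (Fin 3) ℝ))).trace ∧
      ((Pᵀ * (P + Pᵀ - P.trace • (1 : Matrix (Fin 3) (Fin 3) ℝ))).trace = 0 ↔
        (P 0 0 = P 1 1 ∧ P 0 1 = -P 1 0 ∧ P 0 2 = 0 ∧ P 1 2 = 0)) := by
  have key : (Pᵀ * (P + Pᵀ - P.trace • (1 : Matrix (Fin 3) (Fin 3) ℝ))).trace =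
      (P 0 0 - P 1 1)^2 + (P 0 1 + P 1 0)^2 + (P 0 2)^2 + (P 1 2)^2 := by
    simp [Matrix.trace, Matrix.mul_apply, Fin.sum_univ_three, Matrix.one_apply,
      Matrix.diag, h3]
    ring
  rw [key]
  constructor
  · positivity
  · constructor
    · intro h
      refine ⟨?_, ?_, ?_, ?_⟩ <;>
        nlinarith [sq_nonneg (P 0 0 - P 1 1), sq_nonneg (P 0 1 + P 1 0),
          sq_nonneg (P 0 2), sq_nonneg (P 1 2)]
    · rintro ⟨h1, h2, h3, h4⟩
      rw [h1, h2, h3, h4]; ring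
end

section
/- Every 3×3 real matrix P of rank at most 2 satisfies Tr(Pᵀ T′(P)) ≥ 0, where T′(P) = P + Pᵀ − Tr(P)·I. -/
open Matrix

lemma sign3 (x y z : ℝ) (h : 2*(x^2+y^2+z^2) < (x+y+z)^2) :
    (0 < x ∧ 0 < y ∧ 0 < z) ∨ (x < 0 ∧ y < 0 ∧ z < 0) := by
  have hs : x + y + z ≠ 0 := by
    intro h0; rw [h0] at h; nlinarith [sq_nonneg x, sq_nonneg y, sq_nonneg z]
  rcases hs.lt_or_gt with hneg | hpos
  · right
    refine ⟨?_, ?_, ?_⟩ <;> nlinarith [sq_nonneg (y-z), sq_nonneg (x-z), sq_nonneg (x-y),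
      sq_nonneg x, sq_nonneg y, sq_nonneg z]
  · left
    refine ⟨?_, ?_, ?_⟩ <;> nlinarith [sq_nonneg (y-z), sq_nonneg (x-z), sq_nonneg (x-y),
      sq_nonneg x, sq_nonneg y, sq_nonneg z]

lemma spectral_pack {S : Matrix (Fin 3) (Fin 3) ℝ} (hS : S.IsHermitian) :
    ∃ U : Matrix (Fin 3) (Fin 3) ℝ, U * star U = 1 ∧ star U * U = 1 ∧
      S = U * diagonal hS.eigenvalues * star U := by
  refine ⟨(IsHermitian.eigenvectorUnitary hS : Matrix (Fin 3) (Fin 3) ℝ),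
    (Matrix.mem_unitaryGroup_iff).mp (IsHermitian.eigenvectorUnitary hS).2,
    (Matrix.mem_unitaryGroup_iff').mp (IsHermitian.eigenvectorUnitary hS).2, ?_⟩
  have hofReal : (RCLike.ofReal ∘ hS.eigenvalues : Fin 3 → ℝ) = hS.eigenvalues := by
    funext i; simp
  conv_lhs => rw [hS.spectral_theorem]
  rw [hofReal, Unitary.conjStarAlgAut_apply]

lemma quadform_decomp {S : Matrix (Fin 3) (Fin 3) ℝ} (hS : S.IsHermitian)
    {v : Fin 3 → ℝ} (hv : v ≠ 0) :
    ∃ y : Fin 3 → ℝ, y ≠ 0 ∧ v ⬝ᵥ S *ᵥ v = ∑ i, hS.eigenvalues i * y i ^ 2 := by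
  obtain ⟨U, hUU, hUU', hsp⟩ := spectral_pack hS
  have hvU : v ᵥ* U = star U *ᵥ v := by
    rw [star_eq_conjTranspose, conjTranspose_eq_transpose_of_trivial, mulVec_transpose]
  refine ⟨star U *ᵥ v, ?_, ?_⟩
  · intro h0
    apply hv
    have h1 : U *ᵥ (star U *ᵥ v) = 0 := by rw [h0, mulVec_zero]
    rwa [mulVec_mulVec, hUU, one_mulVec] at h1
  · conv_lhs => rw [hsp]
    rw [← mulVec_mulVec, ← mulVec_mulVec, dotProduct_mulVec, hvU]
    simp only [dotProduct, mulVec_diagonal]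
    exact Finset.sum_congr rfl fun i _ => by ring

lemma trace_eq_sum_eig {S : Matrix (Fin 3) (Fin 3) ℝ} (hS : S.IsHermitian) :
    S.trace = ∑ i, hS.eigenvalues i := by
  obtain ⟨U, hUU, hUU', hsp⟩ := spectral_pack hS
  conv_lhs => rw [hsp]
  rw [trace_mul_cycle, hUU', one_mul, trace_diagonal]

lemma trace_sq_eq_sum_eig_sq {S : Matrix (Fin 3) (Fin 3) ℝ} (hS : S.IsHermitian) :
    (S * S).trace = ∑ i, hS.eigenvalues i ^ 2 := by
  obtain ⟨U, hUU, hUU', hsp⟩ := spectral_pack hS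
  have key : S * S = U * (diagonal hS.eigenvalues * diagonal hS.eigenvalues) * star U := by
    conv_lhs => rw [hsp]
    simp only [Matrix.mul_assoc]
    rw [show star U * (U * (diagonal hS.eigenvalues * star U))
        = diagonal hS.eigenvalues * star U by rw [← Matrix.mul_assoc, hUU', one_mul]]
  rw [key, trace_mul_cycle, hUU', one_mul, diagonal_mul_diagonal, trace_diagonal]
  exact Finset.sum_congr rfl fun i _ => by ring

/-- Every 3×3 real matrix `P` of rank at most 2 satisfies `Tr(Pᵀ T′(P)) ≥ 0`,
where `T′(P) = P + Pᵀ − Tr(P)·I`. -/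
theorem stmt11 (P : Matrix (Fin 3) (Fin 3) ℝ) (hP : P.rank ≤ 2) :
    0 ≤ (Pᵀ * (P + Pᵀ - P.trace • (1 : Matrix (Fin 3) (Fin 3) ℝ))).trace := by
  by_contra hF
  push_neg at hF
  have hS : (P + Pᵀ).IsHermitian := by
    have := isHermitian_add_transpose_self P
    rwa [conjTranspose_eq_transpose_of_trivial] at this
  -- key algebraic identity
  have hexp : Pᵀ * (P + Pᵀ - P.trace • (1 : Matrix (Fin 3) (Fin 3) ℝ))
      = Pᵀ * P + Pᵀ * Pᵀ - P.trace • Pᵀ := by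
    rw [Matrix.mul_sub, Matrix.mul_add, Matrix.mul_smul, Matrix.mul_one]
  have hkey : 4 * (Pᵀ * (P + Pᵀ - P.trace • (1 : Matrix (Fin 3) (Fin 3) ℝ))).trace
      = 2 * ((P + Pᵀ) * (P + Pᵀ)).trace - ((P + Pᵀ)).trace ^ 2 := by
    rw [hexp, trace_sub, trace_add, trace_smul]
    simp only [trace_fin_three, Matrix.mul_apply, Matrix.add_apply,
      Matrix.transpose_apply, Fin.sum_univ_three, smul_eq_mul]
    ring
  set μ := hS.eigenvalues with hμ
  have h1 : (P + Pᵀ).trace = μ 0 + μ 1 + μ 2 := by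
    rw [trace_eq_sum_eig hS, Fin.sum_univ_three]
  have h2 : ((P + Pᵀ) * (P + Pᵀ)).trace = μ 0 ^ 2 + μ 1 ^ 2 + μ 2 ^ 2 := by
    rw [trace_sq_eq_sum_eig_sq hS, Fin.sum_univ_three]
  have hq : 2 * ((μ 0)^2 + (μ 1)^2 + (μ 2)^2) < (μ 0 + μ 1 + μ 2)^2 := by
    rw [← h1, ← h2]; linarith [hkey]
  have hsign := sign3 _ _ _ hq
  have hqf : ∀ v : Fin 3 → ℝ, v ≠ 0 → v ⬝ᵥ (P + Pᵀ) *ᵥ v ≠ 0 := by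
    intro v hv
    obtain ⟨y, hy, hEq⟩ := quadform_decomp hS hv
    obtain ⟨j, hj⟩ := Function.ne_iff.mp hy
    have hj' : y j ≠ 0 := by simpa using hj
    have hyj : 0 < y j ^ 2 :=
      lt_of_le_of_ne (sq_nonneg _) (Ne.symm (pow_ne_zero 2 hj'))
    rw [hEq]
    rcases hsign with ⟨e0, e1, e2⟩ | ⟨e0, e1, e2⟩
    · have hpos : 0 < ∑ i, μ i * y i ^ 2 := by
        apply Finset.sum_pos'
        · intro i _
          have hi : 0 < μ i := by fin_cases i <;> assumption
          exact mul_nonneg hi.le (sq_nonneg _)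
        · exact ⟨j, Finset.mem_univ j,
            mul_pos (by fin_cases j <;> assumption) hyj⟩
      exact ne_of_gt hpos
    · have hpos : 0 < ∑ i, -(μ i * y i ^ 2) := by
        apply Finset.sum_pos'
        · intro i _
          have hi : μ i < 0 := by fin_cases i <;> assumption
          have := mul_nonpos_of_nonpos_of_nonneg hi.le (sq_nonneg (y i))
          linarith
        · refine ⟨j, Finset.mem_univ j, ?_⟩
          have hi : μ j < 0 := by fin_cases j <;> assumption
          nlinarith
      rw [Finset.sum_neg_distrib] at hpos
      exact ne_of_lt (by linarith)
  have hdet : P.det ≠ 0 := by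
    intro hd
    obtain ⟨v, hv, hPv⟩ := (Matrix.exists_mulVec_eq_zero_iff).mpr hd
    apply hqf v hv
    have hSv : (P + Pᵀ) *ᵥ v = Pᵀ *ᵥ v := by
      rw [add_mulVec, hPv, zero_add]
    rw [hSv, dotProduct_mulVec, vecMul_transpose, hPv, zero_dotProduct]
  have hunit : IsUnit P := (Matrix.isUnit_iff_isUnit_det P).mpr (isUnit_iff_ne_zero.mpr hdet)
  have hrank : P.rank = 3 := by
    rw [Matrix.rank_of_isUnit P hunit]
    simp
  omega
end

section
/- There is no nonzero symmetric fourth-order tensor T′ (i.e., T′_{ijkl} = T′_{klij}) on 3×3 matrices such that the quadratic form Tr(Pᵀ T′(P)) = Σ T′_{ijkl} P_{ij} P_{kl} vanishes for all 3×3 matrices P of rank at most 2. Equivalently, if Tr(Pᵀ T′(P)) = 0 for all rank ≤ 2 matrices P, then T′ = 0. -/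
open Matrix

lemma myRank_add_le (A B : Matrix (Fin 3) (Fin 3) ℝ) : (A + B).rank ≤ A.rank + B.rank := by
  rw [Matrix.rank, Matrix.rank, Matrix.rank]
  have h : LinearMap.range (A + B).mulVecLin ≤
      LinearMap.range A.mulVecLin ⊔ LinearMap.range B.mulVecLin := by
    rintro x ⟨v, rfl⟩
    rw [Matrix.mulVecLin_add]
    exact Submodule.add_mem_sup ⟨v, rfl⟩ ⟨v, rfl⟩
  exact le_trans (Submodule.finrank_mono h)
    (Submodule.finrank_add_le_finrank_add_finrank _ _)

lemma my_sum_ite {α : Type*} [Fintype α] {p : Prop} [Decidable p] (f : α → ℝ) :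
    ∑ x : α, (if p then f x else 0) = if p then ∑ x, f x else 0 := by
  split <;> simp

lemma myRank_std (a b : Fin 3) (x : ℝ) : (Matrix.single a b x).rank ≤ 1 := by
  rw [Matrix.rank]
  set w : Fin 3 → ℝ := fun i => if a = i then x else 0 with hw
  have h : LinearMap.range (Matrix.single a b x).mulVecLin ≤ Submodule.span ℝ {w} := by
    rintro y ⟨v, rfl⟩
    have : (Matrix.single a b x).mulVecLin v = v b • w := by
      funext i
      simp [Matrix.mulVecLin, Matrix.mulVec, Matrix.single, dotProduct, hw,
        ite_and, mul_comm]
    rw [this]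
    exact Submodule.smul_mem _ _ (Submodule.mem_span_singleton_self w)
  refine le_trans (Submodule.finrank_mono h) ?_
  rcases eq_or_ne w 0 with h0 | h0
  · rw [h0, Submodule.span_zero_singleton]
    simp
  · rw [finrank_span_singleton h0]

/-- There is no nonzero symmetric fourth-order tensor `T′` on 3×3 matrices whose
quadratic form `Σ T′_{ijkl} P_{ij} P_{kl}` vanishes on all matrices of rank ≤ 2:
if the form vanishes on all rank ≤ 2 matrices then `T′ = 0`. -/
theorem stmt12 (T' : Fin 3 → Fin 3 → Fin 3 → Fin 3 → ℝ)
    (hsym : ∀ i j k l, T' i j k l = T' k l i j)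
    (hvan : ∀ P : Matrix (Fin 3) (Fin 3) ℝ, P.rank ≤ 2 →
      ∑ i : Fin 3, ∑ j : Fin 3, ∑ k : Fin 3, ∑ l : Fin 3, T' i j k l * P i j * P k l = 0) :
    ∀ i j k l, T' i j k l = 0 := by
  have hdiag : ∀ a b, T' a b a b = 0 := by
    intro a b
    have h := hvan (Matrix.single a b 1) (le_trans (myRank_std a b 1) (by norm_num))
    simpa [Matrix.single, ite_and, mul_ite, mul_zero, mul_one, ite_mul, zero_mul,
      my_sum_ite, Finset.sum_ite_eq, Finset.mem_univ] using h
  intro a b c d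
  have h := hvan (Matrix.single a b 1 + Matrix.single c d 1)
    (le_trans (myRank_add_le _ _) (add_le_add (myRank_std a b 1) (myRank_std c d 1)))
  simp only [Matrix.add_apply, Matrix.single, Matrix.of_apply, ite_and, mul_add, add_mul,
    mul_ite, mul_zero, mul_one, ite_mul, zero_mul, Finset.sum_add_distrib, my_sum_ite,
    Finset.sum_ite_eq, Finset.mem_univ, if_true] at h
  have hs := hsym a b c d
  have h1 := hdiag a b
  have h2 := hdiag c d
  linarith
end
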